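/- Consider f_ε(x,y,z) = x^{p_x} + z^{p_z} + x y^{p_y} + ε·y^{p_y+1} with integers p_x > p_y + 1 and p_z > p_y + 1, and weights ω_x = 1/p_x, ω_y = (1 − 1/p_x)/p_y, ω_z = 1/p_z (so f₀ is weighted homogeneous of weight 1 and the perturbation y^{p_y+1} has weight > 1). The arc γ₀(t) = (0,t,0) lies in V(f₀), but for ε ≠ 0 there is no real-analytic arc of the form γ_ε(t) = (t^{d_x}·a(t), t, t^{d_z}·b(t)) with d_x, d_z > 1 and a,b analytic, such that f_ε(γ_ε(t)) ≡ 0. -/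
import Mathlib


/-- Brianc̨on–Speder-type obstruction: for `f_ε(x,y,z) = x^{p_x} + z^{p_z} + x y^{p_y} + ε y^{p_y+1}`
with `p_x, p_z > p_y + 1` and `ε ≠ 0`, there is no real-analytic arc
`γ_ε(t) = (t^{d_x} a(t), t, t^{d_z} b(t))` with `d_x, d_z > 1` lying in `V(f_ε)`. -/
theorem stmt8 (px py pz : ℕ) (hpx2 : 2 ≤ px) (hpy2 : 2 ≤ py) (hpz2 : 2 ≤ pz)
    (hpx : py + 1 < px) (hpz : py + 1 < pz) (ε : ℝ) (hε : ε ≠ 0) :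
    ¬ ∃ (dx dz : ℕ) (a b : ℝ → ℝ) (t₀ : ℝ),
        1 < dx ∧ 1 < dz ∧ AnalyticAt ℝ a 0 ∧ AnalyticAt ℝ b 0 ∧ 0 < t₀ ∧
        ∀ t : ℝ, 0 ≤ t → t < t₀ →
          (t ^ dx * a t) ^ px + (t ^ dz * b t) ^ pz
            + (t ^ dx * a t) * t ^ py + ε * t ^ (py + 1) = 0 := by
  rintro ⟨dx, dz, a, b, t₀, hdx, hdz, ha, hb, ht₀, heq⟩
  obtain ⟨e1, he1⟩ : ∃ e1, dx * px = (py + 2) + e1 := by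
    have : py + 2 ≤ dx * px := by nlinarith
    exact ⟨dx * px - (py + 2), by omega⟩
  obtain ⟨e2, he2⟩ : ∃ e2, dz * pz = (py + 2) + e2 := by
    have : py + 2 ≤ dz * pz := by nlinarith
    exact ⟨dz * pz - (py + 2), by omega⟩
  obtain ⟨e3, he3⟩ : ∃ e3, dx + py = (py + 2) + e3 := ⟨dx - 2, by omega⟩
  set h : ℝ → ℝ := fun t => t ^ e1 * (a t) ^ px + t ^ e2 * (b t) ^ pz + t ^ e3 * a t with hh
  have hc : ContinuousAt (fun t => t * h t) 0 := by
    apply continuousAt_id.mul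
    exact (((continuous_pow e1).continuousAt.mul (ha.continuousAt.pow px)).add
      ((continuous_pow e2).continuousAt.mul (hb.continuousAt.pow pz))).add
      ((continuous_pow e3).continuousAt.mul ha.continuousAt)
  have h0 : (fun t : ℝ => t * h t) 0 = 0 := by simp
  have hev : ∀ᶠ t in nhds (0 : ℝ), |t * h t| < |ε| := by
    have := hc.tendsto
    rw [zero_mul] at this
    have := this.eventually (eventually_abs_sub_lt 0 (abs_pos.mpr hε))
    simpa using this
  rw [Metric.eventually_nhds_iff] at hev
  obtain ⟨δ, hδ, hδ'⟩ := hev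
  set t := min (t₀ / 2) (δ / 2) with htdef
  have htpos : 0 < t := lt_min (by linarith) (by linarith)
  have htlt : t < t₀ := lt_of_le_of_lt (min_le_left _ _) (by linarith)
  have htδ : dist t 0 < δ := by
    rw [Real.dist_eq, sub_zero, abs_of_pos htpos]
    exact lt_of_le_of_lt (min_le_right _ _) (by linarith)
  have key := heq t htpos.le htlt
  have hfac : (t ^ dx * a t) ^ px + (t ^ dz * b t) ^ pz
      + (t ^ dx * a t) * t ^ py + ε * t ^ (py + 1)
      = t ^ (py + 1) * (t * h t + ε) := by
    have h1 : (t ^ dx * a t) ^ px = t ^ (py + 1) * (t * (t ^ e1 * (a t) ^ px)) := by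
      rw [mul_pow, ← pow_mul, he1]; ring
    have h2 : (t ^ dz * b t) ^ pz = t ^ (py + 1) * (t * (t ^ e2 * (b t) ^ pz)) := by
      rw [mul_pow, ← pow_mul, he2]; ring
    have h3 : (t ^ dx * a t) * t ^ py = t ^ (py + 1) * (t * (t ^ e3 * a t)) := by
      rw [show t ^ dx * a t * t ^ py = t ^ (dx + py) * a t by rw [pow_add]; ring, he3]; ring
    rw [h1, h2, h3, hh]; ring
  rw [hfac] at key
  have hne : t ^ (py + 1) ≠ 0 := pow_ne_zero _ htpos.ne'
  have : t * h t + ε = 0 := by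
    rcases mul_eq_zero.mp key with h' | h'
    · exact absurd h' hne
    · exact h'
  have habs := hδ' htδ
  have : ε = -(t * h t) := by linarith
  rw [this] at habs
  simp [abs_neg] at habs
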